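/- One step of the Lundberg induction: let μ be a Borel probability measure on [0, ∞) (the claim-size distribution), and let λ > 0, c > 0 and κ > 0 satisfy ∫_{[0,∞)} e^{κx} dμ(x) < ∞ and λ·∫_{[0,∞)} e^{κx} dμ(x) = λ + κc (the adjustment-coefficient equation). Let ψₙ : [0, ∞) → ℝ be measurable with 0 ≤ ψₙ(y) ≤ e^{−κy} for all y ≥ 0, and define ψₙ₊₁(u) = ∫_0^∞ ( μ((u + ct, ∞)) + ∫_{[0, u+ct]} ψₙ(u + ct − x) dμ(x) )·λ·e^{−λt} dt for u ≥ 0. Then ψₙ₊₁(u) ≤ e^{−κu} for all u ≥ 0. -/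

import Mathlib

open MeasureTheory Set

lemma integral_exp_neg_mul_Ioi_zero {b : ℝ} (hb : 0 < b) :
    (∫ t in Ioi (0 : ℝ), Real.exp (-(b * t))) = b⁻¹ := by
  have h := integral_comp_mul_left_Ioi (fun x => Real.exp (-x)) 0 hb
  simp only [mul_zero, integral_exp_neg_Ioi, neg_zero, Real.exp_zero, smul_eq_mul,
    mul_one] at h
  simpa using h

/-- One step of the Lundberg induction: if `0 ≤ ψₙ ≤ e^{-κ·}` on `[0, ∞)` and the
adjustment-coefficient equation `λ ∫ e^{κx} dμ = λ + κc` holds, then the next iterate of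
the ruin recursion also satisfies `ψₙ₊₁(u) ≤ e^{-κu}`. -/
theorem lundberg_induction_step (μ : Measure ℝ) [IsProbabilityMeasure μ]
    (hsupp : μ (Iio 0) = 0) (lam c κ : ℝ) (hlam : 0 < lam) (hc : 0 < c) (hκ : 0 < κ)
    (hInt : IntegrableOn (fun x => Real.exp (κ * x)) (Ici 0) μ)
    (hAdj : lam * ∫ x in Ici 0, Real.exp (κ * x) ∂μ = lam + κ * c)
    (ψ : ℝ → ℝ) (hψ_meas : Measurable ψ)
    (hψ_nonneg : ∀ y, 0 ≤ y → 0 ≤ ψ y) (hψ_le : ∀ y, 0 ≤ y → ψ y ≤ Real.exp (-κ * y))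
    (u : ℝ) (hu : 0 ≤ u) :
    (∫ t in Ioi (0 : ℝ),
        ((μ (Ioi (u + c * t))).toReal + ∫ x in Icc 0 (u + c * t), ψ (u + c * t - x) ∂μ)
          * (lam * Real.exp (-lam * t)))
      ≤ Real.exp (-κ * u) := by
  set M : ℝ := ∫ x in Ici 0, Real.exp (κ * x) ∂μ with hM
  have hM0 : 0 ≤ M := integral_nonneg fun x => (Real.exp_pos _).le
  -- the key pointwise bound
  have key : ∀ v : ℝ, 0 ≤ v →
      (μ (Ioi v)).toReal + (∫ x in Icc 0 v, ψ (v - x) ∂μ) ≤ Real.exp (-κ * v) * M := by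
    intro v hv
    set g : ℝ → ℝ := fun x => Real.exp (-κ * v) * Real.exp (κ * x) with hg
    have hgInt : IntegrableOn g (Ici 0) μ := hInt.const_mul _
    have hIoi : IntegrableOn g (Ioi v) μ := hgInt.mono_set fun x hx => le_trans hv (le_of_lt hx)
    have hIcc : IntegrableOn g (Icc 0 v) μ := hgInt.mono_set fun x hx => hx.1
    have h1 : (μ (Ioi v)).toReal ≤ ∫ x in Ioi v, g x ∂μ := by
      have : (μ (Ioi v)).toReal = ∫ _ in Ioi v, (1 : ℝ) ∂μ := by
        rw [setIntegral_const, smul_eq_mul, mul_one, measureReal_def]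
      rw [this]
      refine setIntegral_mono_on (integrable_const 1) hIoi measurableSet_Ioi ?_
      intro x hx
      have : 0 ≤ κ * (x - v) := mul_nonneg hκ.le (by linarith [mem_Ioi.mp hx])
      have := Real.one_le_exp this
      calc (1 : ℝ) ≤ Real.exp (κ * (x - v)) := this
        _ = g x := by
            show Real.exp (κ * (x - v)) = Real.exp (-κ * v) * Real.exp (κ * x)
            rw [← Real.exp_add]; congr 1; ring
    have h2 : (∫ x in Icc 0 v, ψ (v - x) ∂μ) ≤ ∫ x in Icc 0 v, g x ∂μ := by
      refine setIntegral_mono_on ?_ hIcc measurableSet_Icc ?_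
      · refine Integrable.mono' (integrable_const (1 : ℝ))
          ((hψ_meas.comp (measurable_const.sub measurable_id)).aestronglyMeasurable) ?_
        refine (ae_restrict_iff' measurableSet_Icc).mpr (Filter.Eventually.of_forall ?_)
        intro x hx
        have hx1 : 0 ≤ v - x := by linarith [hx.2]
        have := hψ_le _ hx1
        have h0 := hψ_nonneg _ hx1
        rw [Real.norm_eq_abs, abs_of_nonneg h0]
        calc ψ (v - x) ≤ Real.exp (-κ * (v - x)) := this
          _ ≤ 1 := Real.exp_le_one_iff.mpr (by nlinarith)
      · intro x hx
        have hx1 : 0 ≤ v - x := by linarith [hx.2]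
        calc ψ (v - x) ≤ Real.exp (-κ * (v - x)) := hψ_le _ hx1
          _ = g x := by
            show Real.exp (-κ * (v - x)) = Real.exp (-κ * v) * Real.exp (κ * x)
            rw [← Real.exp_add]; congr 1; ring
    have hsplit : (∫ x in Icc 0 v, g x ∂μ) + (∫ x in Ioi v, g x ∂μ)
        = Real.exp (-κ * v) * M := by
      rw [← setIntegral_union (((Iic_disjoint_Ioi le_rfl).mono_left Icc_subset_Iic_self)) measurableSet_Ioi hIcc hIoi,
        Icc_union_Ioi_eq_Ici hv, hM, ← integral_const_mul]
    linarith [h1, h2]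
  -- bound the outer integral
  set b : ℝ := κ * c + lam with hb
  have hbpos : 0 < b := by positivity
  set C : ℝ := Real.exp (-κ * u) * M * lam with hC
  have hgeq : (fun t : ℝ => Real.exp (-κ * (u + c * t)) * M * (lam * Real.exp (-lam * t)))
      = fun t => C * Real.exp (-(b * t)) := by
    funext t
    rw [hC, hb]
    rw [show -κ * (u + c * t) = -κ * u + -(κ * c * t) by ring, Real.exp_add,
      show -((κ * c + lam) * t) = -(κ * c * t) + -lam * t by ring, Real.exp_add]
    ring
  have hgInt : Integrable (fun t : ℝ => Real.exp (-κ * (u + c * t)) * M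
      * (lam * Real.exp (-lam * t))) (volume.restrict (Ioi 0)) := by
    rw [hgeq]
    simpa [neg_mul] using (exp_neg_integrableOn_Ioi 0 hbpos).const_mul C
  have hmono : (∫ t in Ioi (0 : ℝ),
        ((μ (Ioi (u + c * t))).toReal + ∫ x in Icc 0 (u + c * t), ψ (u + c * t - x) ∂μ)
          * (lam * Real.exp (-lam * t)))
      ≤ ∫ t in Ioi (0 : ℝ), Real.exp (-κ * (u + c * t)) * M * (lam * Real.exp (-lam * t)) := by
    refine integral_mono_of_nonneg ?_ hgInt ?_
    · refine Filter.Eventually.of_forall fun t => ?_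
      refine mul_nonneg (add_nonneg ENNReal.toReal_nonneg ?_)
        (mul_nonneg hlam.le (Real.exp_pos _).le)
      refine setIntegral_nonneg measurableSet_Icc fun x hx => ?_
      exact hψ_nonneg _ (by linarith [hx.2])
    · refine (ae_restrict_iff' measurableSet_Ioi).mpr (Filter.Eventually.of_forall ?_)
      intro t ht
      have hv : 0 ≤ u + c * t := by nlinarith [mem_Ioi.mp ht]
      exact mul_le_mul_of_nonneg_right (key _ hv)
        (mul_nonneg hlam.le (Real.exp_pos _).le)
  refine hmono.trans ?_
  rw [hgeq, integral_const_mul, integral_exp_neg_mul_Ioi_zero hbpos]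
  have : C * b⁻¹ = Real.exp (-κ * u) * ((lam * M) / b) := by
    rw [hC]; field_simp
  rw [this, hAdj, hb]
  rw [show lam + κ * c = κ * c + lam by ring, div_self hbpos.ne', mul_one]
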